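/- Gauss binomial evaluation at roots of unity: for ζ = exp(2πi/n) and 1 ≤ j ≤ d < n, the elementary symmetric polynomial satisfies E_j(tζ^{-(d-1)/2}, tζ^{-(d-1)/2+1}, ..., tζ^{(d-1)/2}) = t^j · ∏_{r=0}^{j-1} sin((d-r)π/n) / ∏_{r=1}^{j} sin(rπ/n). -/

import Mathlib

open Finset Complex Real


noncomputable section

/-- Elementary symmetric polynomial `E_k` in `d` variables. -/
def Epoly (d k : ℕ) (z : Fin d → ℂ) : ℂ :=
  ∑ s ∈ (Finset.univ : Finset (Fin d)).powersetCard k, ∏ i ∈ s, z i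

/-- The centered tuple `ζ^{I_0} = (ζ^{-(d-1)/2}, ζ^{-(d-1)/2+1}, …, ζ^{(d-1)/2})`,
with `ζ^m` interpreted as `exp(2πi·m/n)` for (half-)integers `m`. -/
def zI0 (d n : ℕ) : Fin d → ℂ := fun k =>
  Complex.exp (Real.pi * Complex.I * (2 * (k : ℂ) - ((d : ℂ) - 1)) / n)

noncomputable def Baux (q : ℂ) (d j : ℕ) : ℂ := ∑ s ∈ (Finset.range d).powersetCard j, ∏ i ∈ s, q ^ i

lemma Baux_zero (q : ℂ) (d : ℕ) : Baux q d 0 = 1 := by simp [Baux]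

lemma Baux_big (q : ℂ) (d j : ℕ) (h : d < j) : Baux q d j = 0 := by
  rw [Baux, Finset.powersetCard_eq_empty.2 (by simpa using h), Finset.sum_empty]

lemma Baux_succ (q : ℂ) (d j : ℕ) : Baux q (d+1) (j+1) = Baux q d (j+1) + q ^ d * Baux q d j := by
  have hdisj : Disjoint ((Finset.range d).powersetCard (j+1))
      (((Finset.range d).powersetCard j).image (insert d)) := by
    rw [Finset.disjoint_left]
    intro s hs hs'
    rw [Finset.mem_powersetCard] at hs
    have hds : d ∉ s := fun hmem => (by simpa using hs.1 hmem)
    obtain ⟨u, hu, rfl⟩ := Finset.mem_image.1 hs'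
    exact hds (Finset.mem_insert_self _ _)
  rw [Baux, Finset.range_add_one, Finset.powersetCard_succ_insert (by simp),
    Finset.sum_union hdisj, Finset.sum_image ?_]
  · congr 1
    rw [Baux, Finset.mul_sum]
    refine Finset.sum_congr rfl fun s hs => ?_
    rw [Finset.mem_powersetCard] at hs
    have hd : d ∉ s := fun hmem => (by simpa using hs.1 hmem)
    rw [Finset.prod_insert hd]
  · intro s hs t ht hst
    rw [Finset.mem_coe, Finset.mem_powersetCard] at hs ht
    have hds : d ∉ s := fun hmem => (by simpa using hs.1 hmem)
    have hdt : d ∉ t := fun hmem => (by simpa using ht.1 hmem)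
    rw [← Finset.erase_insert hds, ← Finset.erase_insert hdt, hst]

lemma Baux_formula (q : ℂ) (d : ℕ) : ∀ j : ℕ,
    (∏ r ∈ Finset.range j, (1 - q ^ (r+1))) * Baux q d j
      = q ^ (Nat.choose j 2) * ∏ r ∈ Finset.range j, (1 - q ^ (d - r)) := by
  induction d with
  | zero =>
    intro j
    match j with
    | 0 => simp [Baux_zero]
    | j + 1 =>
      have h0 : (0:ℕ) ∈ Finset.range (j+1) := by simp
      have hz : ∏ r ∈ Finset.range (j+1), (1 - q ^ (0 - r)) = 0 :=
        Finset.prod_eq_zero h0 (by simp)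
      rw [Baux_big q 0 (j+1) (Nat.succ_pos j), hz, mul_zero, mul_zero]
  | succ d ih =>
    intro j
    match j with
    | 0 => simp [Baux_zero]
    | j + 1 =>
      rw [Baux_succ]
      by_cases hjd : j ≤ d
      · have key : ∏ r ∈ Finset.range (j+1), (1 - q ^ (d + 1 - r))
            = (1 - q ^ (d+1)) * ∏ r ∈ Finset.range j, (1 - q ^ (d - r)) := by
          rw [Finset.prod_range_succ']
          simp only [Nat.succ_sub_succ_eq_sub, Nat.sub_zero]
          ring
        have hq : q ^ (d - j) * q ^ j = q ^ d := by
          rw [← pow_add, Nat.sub_add_cancel hjd]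
        have split : ∏ r ∈ Finset.range (j+1), (1 - q ^ (d - r))
            = (∏ r ∈ Finset.range j, (1 - q ^ (d - r))) * (1 - q ^ (d - j)) :=
          Finset.prod_range_succ _ _
        have hc : Nat.choose (j+1) 2 = Nat.choose j 2 + j := by
          simp [Nat.choose_succ_succ, Nat.choose_one_right, Nat.add_comm]
        have ih1 := ih (j+1)
        rw [Finset.prod_range_succ _ j, split, hc, pow_add] at ih1
        rw [Finset.prod_range_succ _ j, key, hc, pow_add, mul_add]
        linear_combination ih1 + (q^d*(1-q^(j+1))) * ih j
          - (q^(Nat.choose j 2) * ∏ r ∈ Finset.range j, (1 - q ^ (d - r))) * hq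
      · have hmem : d + 1 ∈ Finset.range (j+1) := by
          rw [Finset.mem_range]; omega
        have hz : ∏ r ∈ Finset.range (j+1), (1 - q ^ (d + 1 - r)) = 0 :=
          Finset.prod_eq_zero hmem (by simp)
        rw [Baux_big q d (j+1) (by omega), Baux_big q d j (by omega), hz]
        ring


lemma one_sub_exp (x : ℂ) :
    1 - Complex.exp (2*x*Complex.I) = -2*Complex.I*Complex.sin x * Complex.exp (x*Complex.I) := by
  rw [Complex.sin]
  have h1 : Complex.exp (-x*Complex.I) * Complex.exp (x*Complex.I) = 1 := by
    rw [← Complex.exp_add]; ring_nf; exact Complex.exp_zero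
  have h2 : Complex.exp (x*Complex.I) * Complex.exp (x*Complex.I) = Complex.exp (2*x*Complex.I) := by
    rw [← Complex.exp_add]; ring_nf
  linear_combination -h1 + h2 + (Complex.exp (-x*Complex.I) * Complex.exp (x*Complex.I)
    - Complex.exp (x*Complex.I)^2) * Complex.I_sq

lemma one_sub_q_pow (n m : ℕ) :
    (1:ℂ) - (Complex.exp (2*(π:ℂ)*Complex.I/n))^m
      = -2*Complex.I*((Real.sin (m*π/n) : ℝ) : ℂ) * Complex.exp ((m:ℂ)*π/n*Complex.I) := by
  have h : (Complex.exp (2*(π:ℂ)*Complex.I/n))^m = Complex.exp (2*((m:ℂ)*π/n)*Complex.I) := by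
    rw [show (2*((m:ℂ)*π/n)*Complex.I) = m*(2*(π:ℂ)*Complex.I/n) by ring, Complex.exp_nat_mul]
  have hsin : ((Real.sin (m*π/n) : ℝ) : ℂ) = Complex.sin ((m:ℂ)*π/n) := by
    rw [Complex.ofReal_sin]; norm_num
  rw [h, hsin]
  exact one_sub_exp _

lemma prod_one_sub (n j : ℕ) (f : ℕ → ℕ) :
    ∏ r ∈ Finset.range j, ((1:ℂ) - (Complex.exp (2*(π:ℂ)*Complex.I/n))^(f r))
      = (-2*Complex.I)^j * (∏ r ∈ Finset.range j, ((Real.sin (f r * π/n) : ℝ) : ℂ))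
          * Complex.exp ((∑ r ∈ Finset.range j, (f r : ℂ))*π/n*Complex.I) := by
  calc ∏ r ∈ Finset.range j, ((1:ℂ) - (Complex.exp (2*(π:ℂ)*Complex.I/n))^(f r))
      = ∏ r ∈ Finset.range j, (-2*Complex.I*((Real.sin (f r *π/n) : ℝ) : ℂ)
          * Complex.exp ((f r:ℂ)*π/n*Complex.I)) :=
        Finset.prod_congr rfl fun r _ => one_sub_q_pow n (f r)
    _ = _ := by
        rw [Finset.prod_mul_distrib, Finset.prod_mul_distrib, Finset.prod_const,
          ← Complex.exp_sum, ← Finset.sum_mul, ← Finset.sum_div, ← Finset.sum_mul, Finset.card_range]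

lemma Epoly_smul (d j : ℕ) (a : ℂ) (z : Fin d → ℂ) :
    Epoly d j (fun k => a * z k) = a ^ j * Epoly d j z := by
  rw [Epoly, Epoly, Finset.mul_sum]
  refine Finset.sum_congr rfl fun s hs => ?_
  rw [Finset.mem_powersetCard] at hs
  rw [Finset.prod_mul_distrib, Finset.prod_const, hs.2]

lemma Epoly_geom (q : ℂ) (d j : ℕ) :
    Epoly d j (fun k => q ^ (k : ℕ)) = Baux q d j := by
  rw [Epoly, Baux, ← Nat.Iio_eq_range, ← Fin.map_valEmbedding_univ, Finset.powersetCard_map,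
    Finset.sum_map]
  refine Finset.sum_congr rfl fun s hs => ?_
  rw [show (Finset.mapEmbedding Fin.valEmbedding).toEmbedding s = s.map Fin.valEmbedding from rfl,
    Finset.prod_map]
  rfl

/-- Gauss binomial evaluation: for `1 ≤ j ≤ d < n`,
`E_j(tζ^{-(d-1)/2},…,tζ^{(d-1)/2}) = t^j · ∏_{r=0}^{j-1} sin((d-r)π/n) / ∏_{r=1}^{j} sin(rπ/n)`. -/
theorem stmt15 (d n j : ℕ) (hj : 1 ≤ j) (hjd : j ≤ d) (hdn : d < n) (t : ℂ) :
    Epoly d j (fun k => t * zI0 d n k) =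
      t ^ j *
        (((∏ r ∈ Finset.range j, Real.sin (((d : ℝ) - r) * Real.pi / n)) /
            ∏ r ∈ Finset.range j, Real.sin ((r + 1) * Real.pi / n) : ℝ) : ℂ) := by
  have hn : 0 < n := lt_of_le_of_lt (Nat.zero_le d) hdn
  set q : ℂ := Complex.exp (2*(π:ℂ)*Complex.I/n) with hqdef
  set c : ℂ := Complex.exp (-((d:ℂ)-1)*(π:ℂ)*Complex.I/n) with hcdef
  -- Step A: rewrite the evaluation point
  have hfun : (fun k : Fin d => t * zI0 d n k) = (fun k : Fin d => (t*c) * q^(k:ℕ)) := by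
    funext k
    have h1 : c * q^(k:ℕ)
        = Complex.exp (-((d:ℂ)-1)*(π:ℂ)*Complex.I/n + (k:ℕ)*(2*(π:ℂ)*Complex.I/n)) := by
      rw [hcdef, hqdef, ← Complex.exp_nat_mul, ← Complex.exp_add]
    have h2 : zI0 d n k = c * q^(k:ℕ) := by
      rw [zI0, h1]
      congr 1
      ring
    rw [h2, mul_assoc]
  rw [hfun, Epoly_smul, Epoly_geom]
  -- Step B: the q-binomial formula
  have hprim : IsPrimitiveRoot q n := Complex.isPrimitiveRoot_exp n hn.ne'
  have hden_ne : ∀ r ∈ Finset.range j, (1 - q^(r+1)) ≠ 0 := by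
    intro r hr
    rw [Finset.mem_range] at hr
    refine sub_ne_zero.2 fun h => ?_
    exact hprim.pow_ne_one_of_pos_of_lt (Nat.succ_ne_zero r) (by omega) h.symm
  have hDen : (∏ r ∈ Finset.range j, (1 - q^(r+1))) ≠ 0 := Finset.prod_ne_zero_iff.2 hden_ne
  have hB : Baux q d j = q ^ (Nat.choose j 2) * (∏ r ∈ Finset.range j, (1 - q ^ (d - r)))
      / (∏ r ∈ Finset.range j, (1 - q ^ (r+1))) :=
    eq_div_of_mul_eq hDen (by rw [mul_comm]; exact Baux_formula q d j)
  -- Step C: sine product expressions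
  have hNum := prod_one_sub n j (fun r => d - r)
  have hDenE := prod_one_sub n j (fun r => r + 1)
  rw [← hqdef] at hNum hDenE
  set S1v : ℂ := ∑ r ∈ Finset.range j, ((d - r : ℕ) : ℂ) with hS1def
  set S2v : ℂ := ∑ r ∈ Finset.range j, ((r + 1 : ℕ) : ℂ) with hS2def
  set A : ℂ := ∏ r ∈ Finset.range j, ((Real.sin ((d - r : ℕ) * π/n) : ℝ) : ℂ) with hAdef
  set B2 : ℂ := ∏ r ∈ Finset.range j, ((Real.sin ((r + 1 : ℕ) * π/n) : ℝ) : ℂ) with hB2def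
  have hB2ne : B2 ≠ 0 := by
    intro h
    apply hDen
    rw [hDenE, h, mul_zero, zero_mul]
  have h2I : ((-2:ℂ)*Complex.I)^j ≠ 0 := pow_ne_zero _ (by simp [Complex.I_ne_zero])
  have hE2 : Complex.exp (S2v*(π:ℂ)/n*Complex.I) ≠ 0 := Complex.exp_ne_zero _
  -- phase computation
  have hGC : (∑ r ∈ Finset.range j, (r:ℂ)) * 2 = (j:ℂ) * ((j:ℂ)-1) := by
    have h := congrArg (Nat.cast : ℕ → ℂ) (Finset.sum_range_id_mul_two j)
    push_cast [Nat.cast_sub hj] at h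
    exact h
  have hS1 : S1v = (j:ℂ)*(d:ℂ) - ∑ r ∈ Finset.range j, (r:ℂ) := by
    have h' : S1v = ∑ r ∈ Finset.range j, ((d:ℂ) - (r:ℂ)) := by
      rw [hS1def]
      refine Finset.sum_congr rfl fun r hr => ?_
      rw [Finset.mem_range] at hr
      push_cast [Nat.cast_sub (show r ≤ d by omega)]
      ring
    rw [h', Finset.sum_sub_distrib, Finset.sum_const, Finset.card_range, nsmul_eq_mul]
  have hS2 : S2v = (∑ r ∈ Finset.range j, (r:ℂ)) + (j:ℂ) := by
    rw [hS2def]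
    push_cast
    rw [Finset.sum_add_distrib, Finset.sum_const, Finset.card_range, nsmul_eq_mul, mul_one]
  have hC : ((Nat.choose j 2 : ℕ) : ℂ) = (j:ℂ) * ((j:ℂ)-1) / 2 := Nat.cast_choose_two ℂ j
  have hkey : c^j * q^(Nat.choose j 2) * Complex.exp (S1v*(π:ℂ)/n*Complex.I)
      = Complex.exp (S2v*(π:ℂ)/n*Complex.I) := by
    rw [hcdef, hqdef, ← Complex.exp_nat_mul, ← Complex.exp_nat_mul, ← Complex.exp_add,
      ← Complex.exp_add]
    congr 1
    linear_combination (2*(π:ℂ)*Complex.I/(n:ℂ)) * hC + ((π:ℂ)*Complex.I/(n:ℂ)) * hS1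
      - ((π:ℂ)*Complex.I/(n:ℂ)) * hS2 - ((π:ℂ)*Complex.I/(n:ℂ)) * hGC
  -- put it together
  have hmain : (t*c)^j * Baux q d j = t^j * (A / B2) := by
    rw [hB, hNum, hDenE, mul_pow]
    field_simp
    rw [show Complex.I * S1v * (π:ℂ) / n = S1v * (π:ℂ)/n*Complex.I by ring,
      show Complex.I * (π:ℂ) * S2v / n = S2v * (π:ℂ)/n*Complex.I by ring]
    linear_combination (t^j * A) * hkey
  rw [hmain]
  -- convert the sine products to the stated form
  have hA : A = ((∏ r ∈ Finset.range j, Real.sin (((d:ℝ) - r) * π / n) : ℝ) : ℂ) := by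
    rw [hAdef, Complex.ofReal_prod]
    refine Finset.prod_congr rfl fun r hr => ?_
    rw [Finset.mem_range] at hr
    rw [Nat.cast_sub (by omega : r ≤ d)]
  have hB2' : B2 = ((∏ r ∈ Finset.range j, Real.sin (((r:ℝ) + 1) * π / n) : ℝ) : ℂ) := by
    rw [hB2def, Complex.ofReal_prod]
    refine Finset.prod_congr rfl fun r hr => ?_
    push_cast
    ring_nf
  rw [hA, hB2', ← Complex.ofReal_div]
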